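/- There exists a universal constant C > 0 such that for every ε > 0 and every spin field v : Ω⁰_ε → S¹, the total variation of the discrete vorticity measure satisfies |μ_v|(Ω) ≤ C · XY_ε(v), where XY_ε(v) = ½ Σ_{(i,j) ∈ Ω¹_ε} |v(i) − v(j)|². -/

import Mathlib

open MeasureTheory Filter

noncomputable section

/-- The position in `ℝ²` of the lattice point `i ∈ ℤ²` of the lattice `εℤ²`. -/
def pt (ε : ℝ) (i : ℤ × ℤ) : ℝ × ℝ := (ε * i.1, ε * i.2)

/-- `i` is a point of the lattice `Ω⁰_ε = εℤ² ∩ Ω`. -/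
def latticePt (ε : ℝ) (Ω : Set (ℝ × ℝ)) (i : ℤ × ℤ) : Prop := pt ε i ∈ Ω

/-- `(i, j)` is a nearest-neighbor bond in `Ω¹_ε`: both endpoints lie in `Ω` and
`j = i + e₁` or `j = i + e₂` (so that `|i − j| = ε` and `i ≤ j` componentwise). -/
def bond (ε : ℝ) (Ω : Set (ℝ × ℝ)) (i j : ℤ × ℤ) : Prop :=
  latticePt ε Ω i ∧ latticePt ε Ω j ∧ (j = i + (1, 0) ∨ j = i + (0, 1))

/-- `i ∈ Ω²_ε`: the closed cell `i + [0, ε]²` is contained in `Ω`. -/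
def cellIn (ε : ℝ) (Ω : Set (ℝ × ℝ)) (i : ℤ × ℤ) : Prop :=
  Set.Icc (pt ε i) (pt ε i + (ε, ε)) ⊆ Ω

/-- The center of the cell `i + [0, ε]²`. -/
def cellCenter (ε : ℝ) (i : ℤ × ℤ) : ℝ × ℝ := pt ε i + (ε / 2, ε / 2)

/-- The projection `P : ℝ → ℤ` onto the nearest integer (with the tie-breaking convention
making `t − P t ∈ (−1/2, 1/2]`). -/
def Pint (t : ℝ) : ℤ := ⌈t - 1 / 2⌉

/-- The elastic part of the discrete strain of `u` on the (oriented) bond from `i` to `j`: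
`β^e_u = 𝐝u − P(𝐝u) ∈ (−1/2, 1/2]`, where `𝐝u_{i,j} = u(j) − u(i)`. -/
def betaE (u : ℤ × ℤ → ℝ) (i j : ℤ × ℤ) : ℝ :=
  (u j - u i) - (Pint (u j - u i) : ℝ)

/-- The plastic part of the discrete strain: `β^p_u = P(𝐝u) ∈ ℤ`. -/
def betaP (u : ℤ × ℤ → ℝ) (i j : ℤ × ℤ) : ℝ := (Pint (u j - u i) : ℝ)

/-- The discrete curl of a bond function `ξ` around the cell with lower-left corner `i`:
`𝐝ξ(i) = ξ_{i,i+e₂} + ξ_{i+e₂,i+e₁+e₂} − ξ_{i+e₁,i+e₁+e₂} − ξ_{i,i+e₁}`. -/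
def dcurl (ξ : ℤ × ℤ → ℤ × ℤ → ℝ) (i : ℤ × ℤ) : ℝ :=
  ξ i (i + (0, 1)) + ξ (i + (0, 1)) (i + (1, 1)) - ξ (i + (1, 0)) (i + (1, 1)) -
    ξ i (i + (1, 0))

/-- The discrete dislocation function `α_u(i) = 𝐝β^e_u(i)`. -/
def alphaSD (u : ℤ × ℤ → ℝ) (i : ℤ × ℤ) : ℝ := dcurl (betaE u) i

/-- The discrete screw-dislocation energy
`SD_ε(u) = ½ Σ_{(i,j) ∈ Ω¹_ε} dist²(u(i) − u(j), ℤ)`. -/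
def SDen (ε : ℝ) (Ω : Set (ℝ × ℝ)) (u : ℤ × ℤ → ℝ) : ℝ :=
  (1 / 2) * ∑' b : {b : (ℤ × ℤ) × (ℤ × ℤ) // bond ε Ω b.1 b.2},
    (betaE u b.1.1 b.1.2) ^ 2

/-- The total variation `|μ_u|(Ω)` of the discrete dislocation measure
`μ_u = Σ_{i ∈ Ω²_ε} α_u(i) δ_{i+(ε/2,ε/2)}`. -/
def SDtv (ε : ℝ) (Ω : Set (ℝ × ℝ)) (u : ℤ × ℤ → ℝ) : ℝ :=
  ∑' i : {i : ℤ × ℤ // cellIn ε Ω i}, |alphaSD u i|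

/-- The phase `u(v) = θ(v)/2π ∈ [0, 1)` of a spin field `v` with values in `S¹ ⊆ ℂ`
(defined by `v = e^{2πi u(v)}`; any determination of the phase gives the same discrete
vorticity). -/
def phaseu (v : ℤ × ℤ → ℂ) (l : ℤ × ℤ) : ℝ :=
  if 0 ≤ (v l).arg then (v l).arg / (2 * Real.pi) else (v l).arg / (2 * Real.pi) + 1

/-- The discrete vorticity `γ_v = α_{θ(v)/2π}` of a spin field `v`. -/
def gammaXY (v : ℤ × ℤ → ℂ) (i : ℤ × ℤ) : ℝ := alphaSD (phaseu v) i

/-- The `XY` energy `XY_ε(v) = ½ Σ_{(i,j) ∈ Ω¹_ε} |v(i) − v(j)|²`. -/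
def XYen (ε : ℝ) (Ω : Set (ℝ × ℝ)) (v : ℤ × ℤ → ℂ) : ℝ :=
  (1 / 2) * ∑' b : {b : (ℤ × ℤ) × (ℤ × ℤ) // bond ε Ω b.1 b.2},
    ‖v b.1.1 - v b.1.2‖ ^ 2

/-- The total variation `|μ_v|(Ω)` of the discrete vorticity measure. -/
def XYtv (ε : ℝ) (Ω : Set (ℝ × ℝ)) (v : ℤ × ℤ → ℂ) : ℝ :=
  ∑' i : {i : ℤ × ℤ // cellIn ε Ω i}, |gammaXY v i|

section Aux

open Real Complex

lemma betaE_bounds (u : ℤ × ℤ → ℝ) (i j : ℤ × ℤ) :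
    -(1/2) < betaE u i j ∧ betaE u i j ≤ 1/2 := by
  unfold betaE Pint
  constructor
  · have h := Int.ceil_lt_add_one (u j - u i - 1/2)
    linarith
  · have h := Int.le_ceil (u j - u i - 1/2)
    linarith

lemma abs_betaE_le_half (u : ℤ × ℤ → ℝ) (i j : ℤ × ℤ) : |betaE u i j| ≤ 1/2 := by
  obtain ⟨h1, h2⟩ := betaE_bounds u i j
  rw [abs_le]; constructor <;> linarith

lemma abs_betaE_le (u : ℤ × ℤ → ℝ) (i j : ℤ × ℤ) (n : ℤ) :
    |betaE u i j| ≤ |u j - u i - n| := by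
  have hb := abs_betaE_le_half u i j
  have hm : u j - u i - n = betaE u i j + ((Pint (u j - u i) - n : ℤ) : ℝ) := by
    unfold betaE; push_cast; ring
  rcases eq_or_ne (Pint (u j - u i)) n with he | he
  · rw [hm, he]; simp
  · have h1 : (1:ℝ) ≤ |((Pint (u j - u i) - n : ℤ) : ℝ)| := by
      rw [← Int.cast_abs]
      exact_mod_cast Int.one_le_abs (sub_ne_zero.mpr he)
    set m : ℝ := ((Pint (u j - u i) - n : ℤ) : ℝ)
    have h2 : |m| - |betaE u i j + m| ≤ |betaE u i j| := by
      have h3 := abs_sub_abs_le_abs_sub m (betaE u i j + m)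
      have h4 : m - (betaE u i j + m) = -(betaE u i j) := by ring
      rwa [h4, abs_neg] at h3
    rw [hm]
    linarith

lemma alphaSD_eq_int (u : ℤ × ℤ → ℝ) (i : ℤ × ℤ) : ∃ n : ℤ, alphaSD u i = n := by
  refine ⟨-(Pint (u (i+(0,1)) - u i) + Pint (u (i+(1,1)) - u (i+(0,1)))
      - Pint (u (i+(1,1)) - u (i+(1,0))) - Pint (u (i+(1,0)) - u i)), ?_⟩
  unfold alphaSD dcurl betaE
  push_cast
  ring

lemma abs_alphaSD_le (u : ℤ × ℤ → ℝ) (i : ℤ × ℤ) :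
    |alphaSD u i| ≤ 32 * (betaE u i (i+(0,1)) ^ 2 + betaE u (i+(0,1)) (i+(1,1)) ^ 2
      + betaE u (i+(1,0)) (i+(1,1)) ^ 2 + betaE u i (i+(1,0)) ^ 2) := by
  obtain ⟨n, hn⟩ := alphaSD_eq_int u i
  set b0 := betaE u i (i+(0,1)) with hb0d
  set b1 := betaE u (i+(0,1)) (i+(1,1)) with hb1d
  set b2 := betaE u (i+(1,0)) (i+(1,1)) with hb2d
  set b3 := betaE u i (i+(1,0)) with hb3d
  have hd : alphaSD u i = b0 + b1 - b2 - b3 := rfl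
  rcases eq_or_ne n 0 with h0 | h0
  · rw [hn, h0]
    simp only [Int.cast_zero, abs_zero]
    positivity
  · have h1 : (1:ℝ) ≤ |alphaSD u i| := by
      rw [hn, ← Int.cast_abs]
      exact_mod_cast Int.one_le_abs h0
    have hs : |alphaSD u i| ≤ |b0| + |b1| + |b2| + |b3| := by
      rw [hd, show b0 + b1 - b2 - b3 = b0 + b1 + -b2 + -b3 by ring]
      calc |b0 + b1 + -b2 + -b3| ≤ |b0 + b1 + -b2| + |-b3| := abs_add_le _ _
        _ ≤ |b0 + b1| + |-b2| + |-b3| := by linarith [abs_add_le (b0 + b1) (-b2)]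
        _ ≤ |b0| + |b1| + |-b2| + |-b3| := by linarith [abs_add_le b0 b1]
        _ = |b0| + |b1| + |b2| + |b3| := by rw [abs_neg, abs_neg]
    have hsum : (1:ℝ) ≤ |b0| + |b1| + |b2| + |b3| := le_trans h1 hs
    have e0 := abs_betaE_le_half u i (i+(0,1))
    have e1 := abs_betaE_le_half u (i+(0,1)) (i+(1,1))
    have e2 := abs_betaE_le_half u (i+(1,0)) (i+(1,1))
    have e3 := abs_betaE_le_half u i (i+(1,0))
    rw [← hb0d] at e0; rw [← hb1d] at e1; rw [← hb2d] at e2; rw [← hb3d] at e3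
    nlinarith [_root_.sq_abs b0, _root_.sq_abs b1, _root_.sq_abs b2, _root_.sq_abs b3,
      sq_nonneg (|b0| - |b1|), sq_nonneg (|b0| - |b2|), sq_nonneg (|b0| - |b3|),
      sq_nonneg (|b1| - |b2|), sq_nonneg (|b1| - |b3|), sq_nonneg (|b2| - |b3|),
      abs_nonneg b0, abs_nonneg b1, abs_nonneg b2, abs_nonneg b3, hsum, hs]

lemma phaseu_decomp (v : ℤ × ℤ → ℂ) (l : ℤ × ℤ) :
    ∃ c : ℤ, phaseu v l = (v l).arg / (2 * Real.pi) + c := by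
  unfold phaseu
  split_ifs
  · exact ⟨0, by simp⟩
  · exact ⟨1, by push_cast; ring⟩

lemma betaE_phaseu_sq (v : ℤ × ℤ → ℂ) (h : ∀ l, ‖v l‖ = 1) (i j : ℤ × ℤ) :
    16 * betaE (phaseu v) i j ^ 2 ≤ ‖v i - v j‖ ^ 2 := by
  have hπ : (0:ℝ) < Real.pi := Real.pi_pos
  set a := v i with hadef
  set b := v j with hbdef
  have ha : ‖a‖ = 1 := h i
  have hb : ‖b‖ = 1 := h j
  have ha0 : a ≠ 0 := by intro h0; rw [h0] at ha; simp at ha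
  have hb0 : b ≠ 0 := by intro h0; rw [h0] at hb; simp at hb
  have hba : ‖b / a‖ = 1 := by rw [norm_div, ha, hb]; norm_num
  set δ : ℝ := (b / a).arg with hδdef
  have hδ1 : -Real.pi < δ := Complex.neg_pi_lt_arg _
  have hδ2 : δ ≤ Real.pi := Complex.arg_le_pi _
  -- exp identities
  have ea : Complex.exp (a.arg * Complex.I) = a := by
    have := Complex.norm_mul_exp_arg_mul_I a
    rwa [ha, Complex.ofReal_one, one_mul] at this
  have eb : Complex.exp (b.arg * Complex.I) = b := by
    have := Complex.norm_mul_exp_arg_mul_I b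
    rwa [hb, Complex.ofReal_one, one_mul] at this
  have eδ : Complex.exp (δ * Complex.I) = b / a := by
    have := Complex.norm_mul_exp_arg_mul_I (b / a)
    rwa [hba, Complex.ofReal_one, one_mul] at this
  have hone : Complex.exp (((b.arg - a.arg - δ : ℝ) : ℂ) * Complex.I) = 1 := by
    have : (((b.arg - a.arg - δ : ℝ) : ℂ) * Complex.I)
        = (b.arg * Complex.I + (-(a.arg * Complex.I))) + (-(δ * Complex.I)) := by
      push_cast; ring
    rw [this, Complex.exp_add, Complex.exp_add, Complex.exp_neg, Complex.exp_neg,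
      ea, eb, eδ]
    field_simp
  obtain ⟨n, hne⟩ := Complex.exp_eq_one_iff.mp hone
  have hn : b.arg - a.arg - δ = n * (2 * Real.pi) := by
    have h2 : (((b.arg - a.arg - δ : ℝ) : ℂ)) = (n : ℂ) * (2 * Real.pi) := by
      have := hne
      rw [show ((n:ℂ) * (2 * Real.pi * Complex.I)) = ((n:ℂ) * (2 * Real.pi)) * Complex.I by ring] at this
      exact mul_right_cancel₀ Complex.I_ne_zero this
    exact_mod_cast h2
  obtain ⟨ci, hci⟩ := phaseu_decomp v i
  obtain ⟨cj, hcj⟩ := phaseu_decomp v j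
  have hΔ : phaseu v j - phaseu v i - ((n + cj - ci : ℤ) : ℝ) = δ / (2 * Real.pi) := by
    rw [hcj, hci]
    push_cast
    have harg : b.arg - a.arg = δ + n * (2 * Real.pi) := by linarith
    field_simp
    linarith [harg]
  have hbe : |betaE (phaseu v) i j| ≤ |δ| / (2 * Real.pi) := by
    have := abs_betaE_le (phaseu v) i j (n + cj - ci)
    rw [hΔ] at this
    rwa [abs_div, abs_of_pos (by positivity : (0:ℝ) < 2 * Real.pi)] at this
  have hbsq : 4 * Real.pi ^ 2 * betaE (phaseu v) i j ^ 2 ≤ δ ^ 2 := by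
    have h2 : |betaE (phaseu v) i j| * (2 * Real.pi) ≤ |δ| := by
      rw [← le_div_iff₀ (by positivity)]; exact hbe
    have h3 := mul_le_mul h2 h2 (by positivity) (abs_nonneg δ)
    rw [abs_mul_abs_self] at h3
    nlinarith [_root_.sq_abs (betaE (phaseu v) i j), _root_.sq_abs δ, abs_nonneg (betaE (phaseu v) i j)]
  -- chord length
  have hchord : ‖a - b‖ ^ 2 = 2 - 2 * Real.cos δ := by
    have hab : a - b = a * (1 - Complex.exp (δ * Complex.I)) := by
      rw [eδ]; field_simp
    rw [hab, norm_mul, ha, one_mul, Complex.sq_norm, Complex.normSq_apply]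
    have hre : (1 - Complex.exp ((δ:ℂ) * Complex.I)).re = 1 - Real.cos δ := by
      simp [Complex.exp_ofReal_mul_I_re]
    have him : (1 - Complex.exp ((δ:ℂ) * Complex.I)).im = -Real.sin δ := by
      simp [Complex.exp_ofReal_mul_I_im]
    rw [hre, him]
    have := Real.sin_sq_add_cos_sq δ
    ring_nf
    nlinarith [this]
  have hcos : Real.cos δ ≤ 1 - 2 / Real.pi ^ 2 * δ ^ 2 :=
    Real.cos_le_one_sub_mul_cos_sq (abs_le.mpr ⟨by linarith, hδ2⟩)
  have hfinal : 2 / Real.pi ^ 2 * (4 * Real.pi ^ 2 * betaE (phaseu v) i j ^ 2)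
      ≤ 2 / Real.pi ^ 2 * δ ^ 2 :=
    mul_le_mul_of_nonneg_left hbsq (by positivity)
  have hkey : 2 / Real.pi ^ 2 * (4 * Real.pi ^ 2 * betaE (phaseu v) i j ^ 2)
      = 8 * betaE (phaseu v) i j ^ 2 := by
    field_simp
    ring
  rw [hkey] at hfinal
  rw [hchord]
  linarith

end Aux

lemma abs_gammaXY_le (v : ℤ × ℤ → ℂ) (h : ∀ l, ‖v l‖ = 1) (i : ℤ × ℤ) :
    |gammaXY v i| ≤ 2 * (‖v i - v (i+(0,1))‖ ^ 2
      + ‖v (i+(0,1)) - v (i+(1,1))‖ ^ 2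
      + ‖v (i+(1,0)) - v (i+(1,1))‖ ^ 2
      + ‖v i - v (i+(1,0))‖ ^ 2) := by
  have h0 := betaE_phaseu_sq v h i (i+(0,1))
  have h1 := betaE_phaseu_sq v h (i+(0,1)) (i+(1,1))
  have h2 := betaE_phaseu_sq v h (i+(1,0)) (i+(1,1))
  have h3 := betaE_phaseu_sq v h i (i+(1,0))
  have h4 := abs_alphaSD_le (phaseu v) i
  unfold gammaXY
  linarith

lemma corner_lattice {ε : ℝ} (hε : 0 < ε) {Ω : Set (ℝ × ℝ)} {i : ℤ × ℤ}
    (hc : cellIn ε Ω i) (d : ℤ × ℤ) (h1 : 0 ≤ d.1) (h2 : d.1 ≤ 1)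
    (h3 : 0 ≤ d.2) (h4 : d.2 ≤ 1) : latticePt ε Ω (i + d) := by
  have c1 : (0:ℝ) ≤ (d.1:ℝ) := by exact_mod_cast h1
  have c2 : (d.1:ℝ) ≤ 1 := by exact_mod_cast h2
  have c3 : (0:ℝ) ≤ (d.2:ℝ) := by exact_mod_cast h3
  have c4 : (d.2:ℝ) ≤ 1 := by exact_mod_cast h4
  apply hc
  rw [Set.mem_Icc, Prod.le_def, Prod.le_def]
  refine ⟨⟨?_, ?_⟩, ?_, ?_⟩ <;>
    simp only [pt, Prod.fst_add, Prod.snd_add, Int.cast_add] <;>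
    nlinarith [mul_nonneg hε.le c1, mul_nonneg hε.le c3,
      mul_le_mul_of_nonneg_left c2 hε.le, mul_le_mul_of_nonneg_left c4 hε.le]

lemma cellIn_lattice {ε : ℝ} (hε : 0 < ε) {Ω : Set (ℝ × ℝ)} {i : ℤ × ℤ}
    (hc : cellIn ε Ω i) : latticePt ε Ω i := by
  simpa [Prod.mk_zero_zero] using corner_lattice hε hc (0,0) (by decide) (by decide) (by decide) (by decide)

lemma addA (i : ℤ × ℤ) : i + (0,1) + (1,0) = i + (1,1) := by
  rw [add_assoc]; congr 1

lemma addB (i : ℤ × ℤ) : i + (1,0) + (0,1) = i + (1,1) := by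
  rw [add_assoc]; congr 1

lemma lattice_finite {ε : ℝ} (hε : 0 < ε) {Ω : Set (ℝ × ℝ)}
    (hb : Bornology.IsBounded Ω) : {i : ℤ × ℤ | latticePt ε Ω i}.Finite := by
  obtain ⟨R, hR⟩ := hb.subset_closedBall 0
  apply (Set.finite_Icc (-⌈R/ε⌉, -⌈R/ε⌉) (⌈R/ε⌉, ⌈R/ε⌉)).subset
  intro i hi
  have h1 : pt ε i ∈ Metric.closedBall 0 R := hR hi
  rw [Metric.mem_closedBall, dist_zero_right] at h1
  have hf : |ε * (i.1:ℝ)| ≤ R := by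
    have := norm_fst_le (pt ε i)
    rw [Real.norm_eq_abs] at this
    exact le_trans this h1
  have hs : |ε * (i.2:ℝ)| ≤ R := by
    have := norm_snd_le (pt ε i)
    rw [Real.norm_eq_abs] at this
    exact le_trans this h1
  have hf2 : |(i.1:ℝ)| ≤ R / ε := by
    rw [le_div_iff₀ hε, mul_comm]
    rwa [abs_mul, abs_of_pos hε] at hf
  have hs2 : |(i.2:ℝ)| ≤ R / ε := by
    rw [le_div_iff₀ hε, mul_comm]
    rwa [abs_mul, abs_of_pos hε] at hs
  have hf3 : |(i.1:ℝ)| ≤ ((⌈R/ε⌉ : ℤ) : ℝ) := hf2.trans (Int.le_ceil _)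
  have hs3 : |(i.2:ℝ)| ≤ ((⌈R/ε⌉ : ℤ) : ℝ) := hs2.trans (Int.le_ceil _)
  rw [Set.mem_Icc, Prod.le_def, Prod.le_def]
  refine ⟨⟨?_, ?_⟩, ?_, ?_⟩
  · show -⌈R/ε⌉ ≤ i.1
    exact_mod_cast (show ((-⌈R/ε⌉ : ℤ):ℝ) ≤ (i.1:ℝ) by push_cast; linarith [neg_abs_le ((i.1:ℝ))])
  · show -⌈R/ε⌉ ≤ i.2
    exact_mod_cast (show ((-⌈R/ε⌉ : ℤ):ℝ) ≤ (i.2:ℝ) by push_cast; linarith [neg_abs_le ((i.2:ℝ))])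
  · show i.1 ≤ ⌈R/ε⌉
    exact_mod_cast le_trans (le_abs_self _) hf3
  · show i.2 ≤ ⌈R/ε⌉
    exact_mod_cast le_trans (le_abs_self _) hs3

/-- There is a universal constant `C > 0` such that for every `ε > 0` and every spin field
`v : Ω⁰_ε → S¹`, the total variation of the discrete vorticity measure is controlled by the
`XY` energy: `|μ_v|(Ω) ≤ C · XY_ε(v)`. -/
theorem XY_total_variation_bound :
    ∃ C : ℝ, 0 < C ∧
      ∀ (Ω : Set (ℝ × ℝ)), IsOpen Ω → Bornology.IsBounded Ω →
        ∀ ε : ℝ, 0 < ε → ∀ v : ℤ × ℤ → ℂ, (∀ l, ‖v l‖ = 1) →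
          XYtv ε Ω v ≤ C * XYen ε Ω v := by
  refine ⟨16, by norm_num, ?_⟩
  intro Ω hΩo hΩb ε hε v hv
  have hL := lattice_finite hε hΩb
  have hCfin : {i : ℤ × ℤ | cellIn ε Ω i}.Finite :=
    hL.subset (fun i hi => cellIn_lattice hε hi)
  have hBfin : {b : (ℤ × ℤ) × (ℤ × ℤ) | bond ε Ω b.1 b.2}.Finite := by
    apply (hL.prod hL).subset
    rintro ⟨b1, b2⟩ hb
    exact ⟨hb.1, hb.2.1⟩
  haveI instC : Finite {i : ℤ × ℤ // cellIn ε Ω i} := hCfin.to_subtype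
  haveI instB : Finite {b : (ℤ × ℤ) × (ℤ × ℤ) // bond ε Ω b.1 b.2} := hBfin.to_subtype
  let g : {b : (ℤ × ℤ) × (ℤ × ℤ) // bond ε Ω b.1 b.2} → ℝ :=
    fun b => ‖v b.1.1 - v b.1.2‖ ^ 2
  let e0 : {i : ℤ × ℤ // cellIn ε Ω i} → {b : (ℤ × ℤ) × (ℤ × ℤ) // bond ε Ω b.1 b.2} :=
    fun i => ⟨(i.1, i.1 + (0,1)), cellIn_lattice hε i.2,
      corner_lattice hε i.2 (0,1) (by decide) (by decide) (by decide) (by decide),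
      Or.inr rfl⟩
  let e1 : {i : ℤ × ℤ // cellIn ε Ω i} → {b : (ℤ × ℤ) × (ℤ × ℤ) // bond ε Ω b.1 b.2} :=
    fun i => ⟨(i.1 + (0,1), i.1 + (1,1)),
      corner_lattice hε i.2 (0,1) (by decide) (by decide) (by decide) (by decide),
      corner_lattice hε i.2 (1,1) (by decide) (by decide) (by decide) (by decide),
      Or.inl (addA i.1).symm⟩
  let e2 : {i : ℤ × ℤ // cellIn ε Ω i} → {b : (ℤ × ℤ) × (ℤ × ℤ) // bond ε Ω b.1 b.2} :=
    fun i => ⟨(i.1 + (1,0), i.1 + (1,1)),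
      corner_lattice hε i.2 (1,0) (by decide) (by decide) (by decide) (by decide),
      corner_lattice hε i.2 (1,1) (by decide) (by decide) (by decide) (by decide),
      Or.inr (addB i.1).symm⟩
  let e3 : {i : ℤ × ℤ // cellIn ε Ω i} → {b : (ℤ × ℤ) × (ℤ × ℤ) // bond ε Ω b.1 b.2} :=
    fun i => ⟨(i.1, i.1 + (1,0)), cellIn_lattice hε i.2,
      corner_lattice hε i.2 (1,0) (by decide) (by decide) (by decide) (by decide),
      Or.inl rfl⟩
  have hg0 : ∀ b, 0 ≤ g b := fun b => sq_nonneg _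
  have inj0 : Function.Injective e0 := by
    intro x y hxy
    apply Subtype.ext
    have h1 : (e0 x).1.1 = (e0 y).1.1 := by rw [hxy]
    exact h1
  have inj1 : Function.Injective e1 := by
    intro x y hxy
    apply Subtype.ext
    have h1 : (e1 x).1.1 = (e1 y).1.1 := by rw [hxy]
    have h2 : x.1 + (0,1) = y.1 + (0,1) := h1
    exact add_right_cancel h2
  have inj2 : Function.Injective e2 := by
    intro x y hxy
    apply Subtype.ext
    have h1 : (e2 x).1.1 = (e2 y).1.1 := by rw [hxy]
    have h2 : x.1 + (1,0) = y.1 + (1,0) := h1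
    exact add_right_cancel h2
  have inj3 : Function.Injective e3 := by
    intro x y hxy
    apply Subtype.ext
    have h1 : (e3 x).1.1 = (e3 y).1.1 := by rw [hxy]
    exact h1
  have key : ∀ k : {i : ℤ × ℤ // cellIn ε Ω i} → {b : (ℤ × ℤ) × (ℤ × ℤ) // bond ε Ω b.1 b.2},
      Function.Injective k →
      (∑' i : {i : ℤ × ℤ // cellIn ε Ω i}, g (k i)) ≤ ∑' b, g b :=
    fun k hk => Summable.tsum_le_tsum_of_inj k hk (fun c _ => hg0 c) (fun i => le_rfl)
      Summable.of_finite Summable.of_finite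
  have hcell : ∀ i : {i : ℤ × ℤ // cellIn ε Ω i},
      |gammaXY v i.1| ≤ 2 * (g (e0 i) + g (e1 i) + g (e2 i) + g (e3 i)) :=
    fun i => abs_gammaXY_le v hv i.1
  have h1 : XYtv ε Ω v ≤ ∑' i : {i : ℤ × ℤ // cellIn ε Ω i},
      2 * (g (e0 i) + g (e1 i) + g (e2 i) + g (e3 i)) :=
    Summable.tsum_le_tsum hcell Summable.of_finite Summable.of_finite
  have h2 : (∑' i : {i : ℤ × ℤ // cellIn ε Ω i},
        2 * (g (e0 i) + g (e1 i) + g (e2 i) + g (e3 i)))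
      = 2 * ((∑' i, g (e0 i)) + (∑' i, g (e1 i)) + (∑' i, g (e2 i)) + (∑' i, g (e3 i))) := by
    rw [tsum_mul_left]
    congr 1
    rw [Summable.tsum_add (Summable.of_finite) (Summable.of_finite),
      Summable.tsum_add (Summable.of_finite) (Summable.of_finite),
      Summable.tsum_add (Summable.of_finite) (Summable.of_finite)]
  have hT : 0 ≤ ∑' b, g b := tsum_nonneg hg0
  have hXY : XYen ε Ω v = (1/2) * ∑' b, g b := rfl
  rw [h2] at h1
  have k0 := key e0 inj0
  have k1 := key e1 inj1
  have k2 := key e2 inj2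
  have k3 := key e3 inj3
  rw [hXY]
  linarith
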